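/- Let Z be a finite set of cardinality m, D a distribution on Z, and D_n the empirical distribution of n i.i.d. samples from D. For any set A of distributions on Z, Pr(D_n ∈ A) ≤ (n+1)^m · exp(−n · inf_{P ∈ A} KL(P, D)). -/

import Mathlib

open scoped Pointwise BigOperators

/-- `p` is a probability distribution on the finite type `α`. -/
def IsDist {α : Type*} [Fintype α] (p : α → ℝ) : Prop :=
  (∀ z, 0 ≤ p z) ∧ ∑ z, p z = 1

/-- Expected value of `f` under the distribution `p` on the finite type `α`. -/
def expect {α : Type*} [Fintype α] (p f : α → ℝ) : ℝ := ∑ z, p z * f z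

/-- `γ` is a coupling of the distributions `p` and `q` on the finite type `α`. -/
def IsCoupling {α : Type*} [Fintype α] (γ : α × α → ℝ) (p q : α → ℝ) : Prop :=
  (∀ x, 0 ≤ γ x) ∧ (∀ z, ∑ z', γ (z, z') = p z) ∧ (∀ z', ∑ z, γ (z, z') = q z')

/-- The LP (optimal transport) discrepancy `LP_N(p, q)` between two distributions on
a finite set `Z ⊆ ℝ^d`: the least coupling mass placed on pairs `(z, z')` with
`z' − z ∉ N`. -/
noncomputable def LPmetric {d : ℕ} {Z : Finset (Fin d → ℝ)} (N : Set (Fin d → ℝ))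
    (p q : ↥Z → ℝ) : ℝ :=
  sInf {x | ∃ γ : ↥Z × ↥Z → ℝ, IsCoupling γ p q ∧
    x = ∑ w : ↥Z × ↥Z,
      Set.indicator {w : ↥Z × ↥Z | ¬ ((w.2 : Fin d → ℝ) - (w.1 : Fin d → ℝ)) ∈ N} γ w}

/-- Kullback–Leibler divergence between two distributions on a finite type, valued in
the extended reals, with the conventions `0 log (0/q) = 0` and `p log (p/0) = ⊤` for
`p > 0`. -/
noncomputable def KLdiv {α : Type*} [Fintype α] (p q : α → ℝ) : EReal :=
  ∑ z, if p z = 0 then (0 : EReal) else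
    if q z = 0 then (⊤ : EReal) else ((p z * Real.log (p z / q z) : ℝ) : EReal)

/-- Adversarial (evasion) loss: `ℓ^N(z) = max {f z' : z' ∈ Z, z' − z ∈ N}`. -/
noncomputable def advLoss {d : ℕ} (Z : Finset (Fin d → ℝ)) (N : Set (Fin d → ℝ))
    (f : ↥Z → ℝ) (z : ↥Z) : ℝ :=
  sSup {v | ∃ z' : ↥Z, ((z' : Fin d → ℝ) - (z : Fin d → ℝ)) ∈ N ∧ v = f z'}

open scoped Classical

/-- Probability weight of the sample `ω` of `n` i.i.d. draws from the distribution `D`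
on a finite type. -/
def prodw {α : Type*} [Fintype α] (D : α → ℝ) (n : ℕ) (ω : Fin n → α) : ℝ :=
  ∏ i, D (ω i)

/-- Empirical distribution of the sample `ω : Fin n → α`. -/
noncomputable def emp {α : Type*} [Fintype α] [DecidableEq α] (n : ℕ) (ω : Fin n → α)
    (z : α) : ℝ :=
  ((Finset.univ.filter fun i => ω i = z).card : ℝ) / n

/-- Sanov-type upper bound via the method of types: for any set `A` of
distributions on a finite set of cardinality `m`,
`Pr(D_n ∈ A) ≤ (n+1)^m · exp(−n · inf_{P∈A} KL(P,D))`.  The infimum (valued in the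
extended reals, `+∞` on the empty set) is expressed via an arbitrary lower bound `c`. -/
lemma ereal_coe_sum {α : Type*} [Fintype α] (f : α → ℝ) :
    ((∑ z, f z : ℝ) : EReal) = ∑ z, ((f z : ℝ) : EReal) :=
  map_sum (⟨⟨Real.toEReal, EReal.coe_zero⟩, EReal.coe_add⟩ : ℝ →+ EReal) f Finset.univ

lemma prodw_eq_prod_pow {α : Type*} [Fintype α] [DecidableEq α] (Q : α → ℝ) (n : ℕ)
    (ω : Fin n → α) :
    prodw Q n ω = ∏ z, Q z ^ (Finset.univ.filter fun i => ω i = z).card := by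
  rw [prodw, ← Finset.prod_fiberwise_of_maps_to (g := ω) (t := Finset.univ)
    (fun i _ => Finset.mem_univ (ω i))]
  refine Finset.prod_congr rfl fun z _ => ?_
  rw [Finset.prod_congr rfl (fun i hi => by rw [(Finset.mem_filter.mp hi).2]),
    Finset.prod_const]

lemma sum_prodw {α : Type*} [Fintype α] (P : α → ℝ) (n : ℕ) :
    ∑ ω : Fin n → α, prodw P n ω = (∑ z, P z) ^ n := by
  simp only [prodw]
  rw [← Fintype.piFinset_univ, Finset.sum_prod_piFinset, Finset.prod_const,
    Finset.card_univ, Fintype.card_fin]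

lemma fiber_bound {α : Type*} [Fintype α] [DecidableEq α] (D : α → ℝ) (hD : IsDist D)
    (n : ℕ) (k : α → ℕ) (hk : ∑ z, k z = n) (c : ℝ)
    (hc : (c : EReal) ≤ KLdiv (fun z => (k z : ℝ) / n) D) :
    ∑ ω ∈ Finset.univ.filter (fun ω : Fin n → α =>
        (fun z => (Finset.univ.filter fun i => ω i = z).card) = k),
      prodw D n ω ≤ Real.exp (-(n : ℝ) * c) := by
  set P : α → ℝ := fun z => (k z : ℝ) / n with hP
  set fib := Finset.univ.filter (fun ω : Fin n → α =>
      (fun z => (Finset.univ.filter fun i => ω i = z).card) = k) with hfib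
  have hfibsum : ∀ Q : α → ℝ, ∑ ω ∈ fib, prodw Q n ω = (fib.card : ℝ) * ∏ z, Q z ^ k z := by
    intro Q
    rw [Finset.sum_congr rfl (fun ω hω => ?_), Finset.sum_const, nsmul_eq_mul]
    rw [prodw_eq_prod_pow]
    exact Finset.prod_congr rfl fun z _ => by
      rw [congrFun (Finset.mem_filter.mp hω).2 z]
  have hkn : ∀ z, k z ≤ n := fun z => hk ▸ Finset.single_le_sum (f := k) (fun _ _ => Nat.zero_le _) (Finset.mem_univ z)
  have hP0 : ∀ z, k z = 0 → P z = 0 := by intro z h; simp [hP, h]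
  by_cases hcase : ∀ z, k z ≠ 0 → D z ≠ 0
  · -- non-degenerate case
    set g : α → ℝ := fun z => if k z = 0 then 0 else P z * Real.log (P z / D z) with hg
    have hPk0 : ∀ z, P z = 0 → k z = 0 := by
      intro z h
      by_contra hzk
      have hn : (0:ℝ) < n := by
        have : 1 ≤ n := le_trans (Nat.one_le_iff_ne_zero.mpr hzk) (hkn z)
        exact_mod_cast this
      have h' : (k z : ℝ) / (n : ℝ) = 0 := h
      rcases div_eq_zero_iff.mp h' with h'' | h''
      · exact hzk (by exact_mod_cast h'')
      · exact absurd h'' (ne_of_gt hn)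
    have hKL : KLdiv P D = ((∑ z, g z : ℝ) : EReal) := by
      rw [KLdiv, ereal_coe_sum]
      refine Finset.sum_congr rfl fun z _ => ?_
      by_cases hz : P z = 0
      · simp [hz, hg, hPk0 z hz]
      · have hkz : k z ≠ 0 := fun h => hz (hP0 z h)
        simp [hz, hcase z hkz, hg, hkz]
    have hcr : c ≤ ∑ z, g z := by
      rw [hKL] at hc
      exact_mod_cast hc
    have hPpos : ∀ z, k z ≠ 0 → 0 < P z := by
      intro z hzk
      have hn : (0:ℝ) < n := by
        have : 1 ≤ n := le_trans (Nat.one_le_iff_ne_zero.mpr hzk) (hkn z)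
        exact_mod_cast this
      have : (0:ℝ) < k z := by
        have : 1 ≤ k z := Nat.one_le_iff_ne_zero.mpr hzk
        exact_mod_cast this
      exact div_pos this hn
    have hDpos : ∀ z, k z ≠ 0 → 0 < D z := fun z h => (hD.1 z).lt_of_ne (Ne.symm (hcase z h))
    -- pointwise: D z ^ k z = exp(-n * g z) * P z ^ k z
    have hpt : ∀ z, D z ^ k z = Real.exp (-(n : ℝ) * g z) * P z ^ k z := by
      intro z
      by_cases hzk : k z = 0
      · simp [hzk, hg]
      · have hPz := hPpos z hzk
        have hDz := hDpos z hzk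
        have hn0 : (n:ℝ) ≠ 0 := by
          have : 1 ≤ n := le_trans (Nat.one_le_iff_ne_zero.mpr hzk) (hkn z)
          positivity
        have hnP : (n : ℝ) * P z = (k z : ℝ) := by
          simp only [hP]
          field_simp
        have : -(n : ℝ) * g z = (k z : ℝ) * Real.log (D z / P z) := by
          have hlog : Real.log (P z / D z) = - Real.log (D z / P z) := by
            rw [← Real.log_inv, inv_div]
          simp only [hg, if_neg hzk]
          rw [hlog, ← hnP]
          ring
        rw [this, Real.exp_nat_mul, Real.exp_log (div_pos hDz hPz), div_pow,
          div_mul_cancel₀]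
        positivity
    have hprodD : ∏ z, D z ^ k z = Real.exp (-(n:ℝ) * ∑ z, g z) * ∏ z, P z ^ k z := by
      rw [Finset.prod_congr rfl fun z _ => hpt z, Finset.prod_mul_distrib,
        ← Real.exp_sum, ← Finset.mul_sum]
    have hNP : (fib.card : ℝ) * ∏ z, P z ^ k z ≤ 1 := by
      rw [← hfibsum P]
      have h1 : ∑ ω ∈ fib, prodw P n ω ≤ ∑ ω : Fin n → α, prodw P n ω := by
        refine Finset.sum_le_sum_of_subset_of_nonneg (Finset.subset_univ _) ?_
        intro ω _ _
        refine Finset.prod_nonneg fun i _ => ?_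
        positivity
      have h2 : ∑ ω : Fin n → α, prodw P n ω ≤ 1 := by
        rw [sum_prodw]
        rcases Nat.eq_zero_or_pos n with hn | hn
        · simp [hn]
        · have : ∑ z, P z = 1 := by
            rw [hP, ← Finset.sum_div]
            rw [show ∑ z, (k z : ℝ) = (n : ℝ) by exact_mod_cast congrArg Nat.cast hk]
            field_simp
          rw [this, one_pow]
      exact le_trans h1 h2
    have hPprod_nonneg : 0 ≤ ∏ z, P z ^ k z := by
      refine Finset.prod_nonneg fun z _ => ?_
      positivity
    calc ∑ ω ∈ fib, prodw D n ω = (fib.card : ℝ) * ∏ z, D z ^ k z := hfibsum D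
      _ = ((fib.card : ℝ) * ∏ z, P z ^ k z) * Real.exp (-(n:ℝ) * ∑ z, g z) := by
          rw [hprodD]; ring
      _ ≤ 1 * Real.exp (-(n:ℝ) * ∑ z, g z) :=
          mul_le_mul_of_nonneg_right hNP (Real.exp_pos _).le
      _ = Real.exp (-(n:ℝ) * ∑ z, g z) := one_mul _
      _ ≤ Real.exp (-(n:ℝ) * c) := by
          apply Real.exp_le_exp.mpr
          have := mul_le_mul_of_nonneg_left hcr (Nat.cast_nonneg (α := ℝ) n)
          linarith
  · push_neg at hcase
    obtain ⟨z0, hz0k, hz0D⟩ := hcase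
    have : ∏ z, D z ^ k z = 0 :=
      Finset.prod_eq_zero (Finset.mem_univ z0) (by rw [hz0D]; exact zero_pow hz0k)
    rw [hfibsum D, this, mul_zero]
    positivity

theorem sanov_upper_bound {α : Type*} [Fintype α] [DecidableEq α]
    (D : α → ℝ) (hD : IsDist D) (n : ℕ)
    (A : Set (α → ℝ)) (c : ℝ) (hc : ∀ P ∈ A, (c : EReal) ≤ KLdiv P D) :
    ∑ ω : Fin n → α, (if emp n ω ∈ A then prodw D n ω else 0)
      ≤ ((n : ℝ) + 1) ^ (Fintype.card α) * Real.exp (-(n : ℝ) * c) := by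
  set cnt : (Fin n → α) → (α → ℕ) :=
    fun ω z => (Finset.univ.filter fun i => ω i = z).card with hcnt
  set T := (Finset.univ : Finset (Fin n → α)).image cnt with hT
  have hpart := Finset.sum_fiberwise_of_maps_to (s := Finset.univ) (g := cnt) (t := T)
    (fun ω _ => Finset.mem_image_of_mem cnt (Finset.mem_univ ω))
    (fun ω => if emp n ω ∈ A then prodw D n ω else 0)
  rw [← hpart]
  have hksum : ∀ k ∈ T, ∑ z, k z = n := by
    intro k hk
    obtain ⟨ω, _, rfl⟩ := Finset.mem_image.mp hk
    have := Finset.card_eq_sum_card_fiberwise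
      (f := ω) (s := Finset.univ) (t := Finset.univ) (fun i _ => Finset.mem_univ _)
    simpa [hcnt] using this.symm
  have hempk : ∀ (ω : Fin n → α), emp n ω = fun z => ((cnt ω z : ℝ) / n) := by
    intro ω; funext z; rfl
  have hstep : ∀ k ∈ T,
      (∑ ω ∈ Finset.univ.filter fun ω => cnt ω = k,
        if emp n ω ∈ A then prodw D n ω else 0) ≤ Real.exp (-(n : ℝ) * c) := by
    intro k hk
    by_cases hA : (fun z => (k z : ℝ) / n) ∈ A
    · have : (∑ ω ∈ Finset.univ.filter fun ω => cnt ω = k,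
          if emp n ω ∈ A then prodw D n ω else 0)
          = ∑ ω ∈ Finset.univ.filter fun ω => cnt ω = k, prodw D n ω := by
        refine Finset.sum_congr rfl fun ω hω => ?_
        rw [if_pos]
        rw [hempk ω, (Finset.mem_filter.mp hω).2]
        exact hA
      rw [this]
      exact fiber_bound D hD n k (hksum k hk) c (hc _ hA)
    · have : (∑ ω ∈ Finset.univ.filter fun ω => cnt ω = k,
          if emp n ω ∈ A then prodw D n ω else 0) = 0 := by
        refine Finset.sum_eq_zero fun ω hω => ?_
        rw [if_neg]
        rw [hempk ω, (Finset.mem_filter.mp hω).2]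
        exact hA
      rw [this]
      positivity
  have hcard : (T.card : ℝ) ≤ ((n : ℝ) + 1) ^ Fintype.card α := by
    have hbd : ∀ k ∈ T, ∀ z, k z ≤ n := by
      intro k hk z
      have h1 : k z ≤ ∑ z, k z :=
        Finset.single_le_sum (f := k) (fun _ _ => Nat.zero_le _) (Finset.mem_univ z)
      exact hksum k hk ▸ h1
    have hinj : T.card ≤ (Finset.univ : Finset (α → Fin (n + 1))).card := by
      refine Finset.card_le_card_of_injOn
        (fun k z => (⟨min (k z) n, by omega⟩ : Fin (n + 1)))
        (fun _ _ => Finset.mem_univ _) ?_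
      intro k1 hk1 k2 hk2 h
      funext z
      have h1 := hbd k1 hk1 z
      have h2 := hbd k2 hk2 z
      have := congrArg Fin.val (congrFun h z)
      simpa [Nat.min_eq_left h1, Nat.min_eq_left h2] using this
    have : T.card ≤ (n + 1) ^ Fintype.card α := by
      simpa [Fintype.card_fun] using hinj
    calc (T.card : ℝ) ≤ (((n + 1) ^ Fintype.card α : ℕ) : ℝ) := by exact_mod_cast this
      _ = ((n : ℝ) + 1) ^ Fintype.card α := by push_cast; ring
  calc (∑ k ∈ T, ∑ ω ∈ Finset.univ.filter fun ω => cnt ω = k,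
        if emp n ω ∈ A then prodw D n ω else 0)
      ≤ ∑ k ∈ T, Real.exp (-(n : ℝ) * c) := Finset.sum_le_sum hstep
    _ = (T.card : ℝ) * Real.exp (-(n : ℝ) * c) := by
        rw [Finset.sum_const, nsmul_eq_mul]
    _ ≤ ((n : ℝ) + 1) ^ Fintype.card α * Real.exp (-(n : ℝ) * c) :=
        mul_le_mul_of_nonneg_right hcard (Real.exp_pos _).le
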